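/- Let n ≥ 1, 0 < p < 2/(n-2)⁺, and let ω be a positive solution of Δω - ω + ω^{2p+1} = 0 on ℝⁿ. Assume μ₁, μ₂ ≤ 0, β₁, β₂ > 0, μ₁β₁^p = μ₂β₂^p, and μ₁ + β₂^{(p+1)/2}/β₁^{(p-1)/2} > 0. Then the pair u₁ = (μ₁ + β₂^{(p+1)/2}/β₁^{(p-1)/2})^{-1/(2p)} ω, u₂ = (μ₂ + β₁^{(p+1)/2}/β₂^{(p-1)/2})^{-1/(2p)} ω is a positive solution of the system u₁ - Δu₁ = μ₁u₁^{2p+1} + β₁u₂^{p+1}u₁^{p}, u₂ - Δu₂ = μ₂u₂^{2p+1} + β₂u₁^{p+1}u₂^{p} on ℝⁿ. -/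

import Mathlib

open MeasureTheory

noncomputable section

/-- The Laplacian of `u : ℝⁿ → ℝ`. -/
def lap {n : ℕ} (u : EuclideanSpace ℝ (Fin n) → ℝ) (x : EuclideanSpace ℝ (Fin n)) : ℝ :=
  ∑ i : Fin n, fderiv ℝ (fun y => fderiv ℝ u y (EuclideanSpace.single i 1)) x
    (EuclideanSpace.single i 1)

lemma fderiv_const_mul'' {E : Type*} [NormedAddCommGroup E] [NormedSpace ℝ E]
    (c : ℝ) (hc : c ≠ 0) (f : E → ℝ) (x : E) (v : E) :
    fderiv ℝ (fun y => c * f y) x v = c * fderiv ℝ f x v := by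
  by_cases h : DifferentiableAt ℝ f x
  · rw [fderiv_const_mul h c]; simp
  · rw [fderiv_zero_of_not_differentiableAt h, fderiv_zero_of_not_differentiableAt]
    · simp
    · intro h'
      apply h
      have h2 := h'.const_mul c⁻¹
      simp only [← mul_assoc, inv_mul_cancel₀ hc, one_mul] at h2
      exact h2

lemma lap_const_mul {n : ℕ} (c : ℝ) (hc : c ≠ 0) (u : EuclideanSpace ℝ (Fin n) → ℝ)
    (x : EuclideanSpace ℝ (Fin n)) :
    lap (fun y => c * u y) x = c * lap u x := by
  unfold lap
  rw [Finset.mul_sum]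
  refine Finset.sum_congr rfl fun i _ => ?_
  have h1 : (fun y => fderiv ℝ (fun z => c * u z) y (EuclideanSpace.single i 1))
      = fun y => c * fderiv ℝ u y (EuclideanSpace.single i 1) := by
    funext y; exact fderiv_const_mul'' c hc u y _
  rw [h1, fderiv_const_mul'' c hc]

lemma scalar_key (p a b A : ℝ) (hp : 0 < p) (ha : 0 < a) (hb : 0 < b) (hA : 0 < A) :
    A ^ (-(1/(2*p))) =
      (A - b ^ ((p+1)/2) / a ^ ((p-1)/2)) * (A ^ (-(1/(2*p)))) ^ (2*p+1)
      + a * ((A * (a/b) ^ p) ^ (-(1/(2*p)))) ^ (p+1) * (A ^ (-(1/(2*p)))) ^ p := by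
  have hab : (0:ℝ) < a/b := div_pos ha hb
  have hp2 : (2*p) ≠ 0 := by positivity
  set e : ℝ := -(1/(2*p)) with he
  have hpe : p * e = -(1/2) := by rw [he]; field_simp
  have hc2 : (A * (a/b) ^ p) ^ e = A ^ e * (a/b) ^ (-(1/2 : ℝ)) := by
    rw [Real.mul_rpow hA.le (Real.rpow_pos_of_pos hab p).le, ← Real.rpow_mul hab.le, hpe]
  have hterm2 : ((A ^ e * (a/b) ^ (-(1/2:ℝ)))) ^ (p+1)
      = A ^ (e*(p+1)) * (a/b) ^ (-((p+1)/2)) := by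
    have hh : -(1/2:ℝ)*(p+1) = -((p+1)/2) := by ring
    rw [Real.mul_rpow (Real.rpow_pos_of_pos hA e).le (Real.rpow_pos_of_pos hab _).le,
      ← Real.rpow_mul hA.le, ← Real.rpow_mul hab.le, hh]
  have hx : (a/b) ^ (-((p+1)/2)) = (b/a) ^ ((p+1)/2) := by
    rw [Real.rpow_neg hab.le, ← Real.inv_rpow hab.le, inv_div]
  have hK : a * (a/b) ^ (-((p+1)/2)) = b ^ ((p+1)/2) / a ^ ((p-1)/2) := by
    have haa : a * a ^ ((p-1)/2) = a ^ ((p+1)/2) := by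
      nth_rewrite 1 [← Real.rpow_one a]
      rw [← Real.rpow_add ha]
      congr 1; ring
    rw [hx, Real.div_rpow hb.le ha.le, mul_div_assoc',
      div_eq_div_iff (by positivity) (by positivity)]
    linear_combination (b ^ ((p+1)/2)) * haa
  have hmerge : A ^ (e*(p+1)) * A ^ (e*p) = A ^ (e*(2*p+1)) := by
    rw [← Real.rpow_add hA]; congr 1; ring
  have hAe : A ^ e = A * A ^ (e*(2*p+1)) := by
    nth_rewrite 2 [← Real.rpow_one A]
    rw [← Real.rpow_add hA]
    congr 1
    rw [he]; field_simp; ring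
  rw [hc2, ← Real.rpow_mul hA.le, hterm2, ← Real.rpow_mul hA.le]
  linear_combination hAe - (A ^ (e*(p+1)) * A ^ (e*p)) * hK
    - (b ^ ((p+1)/2) / a ^ ((p-1)/2)) * hmerge

/-- The explicit pair
`u₁ = (μ₁ + β₂^{(p+1)/2}/β₁^{(p-1)/2})^{-1/(2p)} ω`,
`u₂ = (μ₂ + β₁^{(p+1)/2}/β₂^{(p-1)/2})^{-1/(2p)} ω`
is a positive solution of the system
`u₁ - Δu₁ = μ₁u₁^{2p+1} + β₁u₂^{p+1}u₁^{p}`, `u₂ - Δu₂ = μ₂u₂^{2p+1} + β₂u₁^{p+1}u₂^{p}`. -/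
theorem explicit_pair_is_positive_solution
    {n : ℕ} (hn : 1 ≤ n) (p μ₁ μ₂ β₁ β₂ : ℝ)
    (hp : 0 < p) (hpn : 3 ≤ n → p < 2 / ((n : ℝ) - 2))
    (ω : EuclideanSpace ℝ (Fin n) → ℝ)
    (hω_pos : ∀ x, 0 < ω x)
    (hω_sol : ∀ x, lap ω x - ω x + ω x ^ (2 * p + 1) = 0)
    (hμ₁ : μ₁ ≤ 0) (hμ₂ : μ₂ ≤ 0) (hβ₁ : 0 < β₁) (hβ₂ : 0 < β₂)
    (hbal : μ₁ * β₁ ^ p = μ₂ * β₂ ^ p)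
    (hpos : 0 < μ₁ + β₂ ^ ((p + 1) / 2) / β₁ ^ ((p - 1) / 2)) :
    let c₁ : ℝ := (μ₁ + β₂ ^ ((p + 1) / 2) / β₁ ^ ((p - 1) / 2)) ^ (-(1 / (2 * p)))
    let c₂ : ℝ := (μ₂ + β₁ ^ ((p + 1) / 2) / β₂ ^ ((p - 1) / 2)) ^ (-(1 / (2 * p)))
    (∀ x, 0 < c₁ * ω x) ∧ (∀ x, 0 < c₂ * ω x) ∧
    (∀ x, c₁ * ω x - lap (fun y => c₁ * ω y) x =
      μ₁ * (c₁ * ω x) ^ (2 * p + 1) + β₁ * (c₂ * ω x) ^ (p + 1) * (c₁ * ω x) ^ p) ∧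
    (∀ x, c₂ * ω x - lap (fun y => c₂ * ω y) x =
      μ₂ * (c₂ * ω x) ^ (2 * p + 1) + β₂ * (c₁ * ω x) ^ (p + 1) * (c₂ * ω x) ^ p) := by
  intro c₁ c₂
  set A : ℝ := μ₁ + β₂ ^ ((p + 1) / 2) / β₁ ^ ((p - 1) / 2) with hA_def
  set B : ℝ := μ₂ + β₁ ^ ((p + 1) / 2) / β₂ ^ ((p - 1) / 2) with hB_def
  have hA : 0 < A := hpos
  -- B = A * (β₁/β₂)^p
  have h2 : μ₁ * (β₁/β₂) ^ p = μ₂ := by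
    rw [Real.div_rpow hβ₁.le hβ₂.le]
    rw [mul_div_assoc', hbal, mul_div_assoc,
      div_self (ne_of_gt (Real.rpow_pos_of_pos hβ₂ p)), mul_one]
  have h3 : (β₂ ^ ((p+1)/2) / β₁ ^ ((p-1)/2)) * (β₁/β₂) ^ p
      = β₁ ^ ((p+1)/2) / β₂ ^ ((p-1)/2) := by
    rw [Real.div_rpow hβ₁.le hβ₂.le, div_mul_div_comm,
      div_eq_div_iff (by positivity) (by positivity)]
    have e1 : β₂ ^ ((p+1)/2) * β₂ ^ ((p-1)/2) = β₂ ^ p := by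
      rw [← Real.rpow_add hβ₂]; congr 1; ring
    have e2 : β₁ ^ ((p+1)/2) * β₁ ^ ((p-1)/2) = β₁ ^ p := by
      rw [← Real.rpow_add hβ₁]; congr 1; ring
    calc β₂ ^ ((p+1)/2) * β₁ ^ p * β₂ ^ ((p-1)/2)
        = (β₂ ^ ((p+1)/2) * β₂ ^ ((p-1)/2)) * β₁ ^ p := by ring
      _ = β₂ ^ p * β₁ ^ p := by rw [e1]
      _ = β₁ ^ ((p+1)/2) * (β₁ ^ ((p-1)/2) * β₂ ^ p) := by rw [← e2]; ring
  have hBA : B = A * (β₁/β₂) ^ p := by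
    rw [hA_def, hB_def, add_mul, h2, h3]
  have hB : 0 < B := by
    rw [hBA]; positivity
  have hAB : A = B * (β₂/β₁) ^ p := by
    rw [hBA, mul_assoc, ← Real.mul_rpow (by positivity) (by positivity)]
    have : β₁/β₂ * (β₂/β₁) = 1 := by field_simp
    rw [this, Real.one_rpow, mul_one]
  have hc₁ : 0 < c₁ := Real.rpow_pos_of_pos hA _
  have hc₂ : 0 < c₂ := Real.rpow_pos_of_pos hB _
  have eq1 : c₁ = μ₁ * c₁ ^ (2*p+1) + β₁ * c₂ ^ (p+1) * c₁ ^ p := by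
    have := scalar_key p β₁ β₂ A hp hβ₁ hβ₂ hA
    rw [← hBA] at this
    have hμ : A - β₂ ^ ((p+1)/2) / β₁ ^ ((p-1)/2) = μ₁ := by rw [hA_def]; ring
    rw [hμ] at this
    exact this
  have eq2 : c₂ = μ₂ * c₂ ^ (2*p+1) + β₂ * c₁ ^ (p+1) * c₂ ^ p := by
    have := scalar_key p β₂ β₁ B hp hβ₂ hβ₁ hB
    rw [← hAB] at this
    have hμ : B - β₁ ^ ((p+1)/2) / β₂ ^ ((p-1)/2) = μ₂ := by rw [hB_def]; ring
    rw [hμ] at this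
    exact this
  refine ⟨fun x => mul_pos hc₁ (hω_pos x), fun x => mul_pos hc₂ (hω_pos x), ?_, ?_⟩
  · intro x
    have hω := hω_pos x
    have hL : lap ω x = ω x - ω x ^ (2*p+1) := by linarith [hω_sol x]
    have hsplit : ω x ^ (2*p+1) = ω x ^ (p+1) * ω x ^ p := by
      rw [← Real.rpow_add hω]; congr 1; ring
    rw [lap_const_mul c₁ (ne_of_gt hc₁) ω x, hL,
      Real.mul_rpow hc₁.le hω.le, Real.mul_rpow hc₂.le hω.le, Real.mul_rpow hc₁.le hω.le]
    linear_combination (ω x ^ (2*p+1)) * eq1 + (β₁ * c₂ ^ (p+1) * c₁ ^ p) * hsplit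
  · intro x
    have hω := hω_pos x
    have hL : lap ω x = ω x - ω x ^ (2*p+1) := by linarith [hω_sol x]
    have hsplit : ω x ^ (2*p+1) = ω x ^ (p+1) * ω x ^ p := by
      rw [← Real.rpow_add hω]; congr 1; ring
    rw [lap_const_mul c₂ (ne_of_gt hc₂) ω x, hL,
      Real.mul_rpow hc₂.le hω.le, Real.mul_rpow hc₁.le hω.le, Real.mul_rpow hc₂.le hω.le]
    linear_combination (ω x ^ (2*p+1)) * eq2 + (β₂ * c₁ ^ (p+1) * c₂ ^ p) * hsplit
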